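/- Let k be a field of characteristic 2, R a k-algebra, and r, s ∈ R. Let A = R[x,y] and let δ = f·∂/∂x + g·∂/∂y where f, g ∈ R[x,y]. With respect to the basis 1, x, y, xy of A as a free module over A' = R[x²,y²], assuming f, g ∈ A', the cokernel of δ : A → A is isomorphic as an A'-module to (A'/(f,g)A') ⊕ (A'^⊕2/(f,g)·A') ⊕ A', where (f,g)·A' denotes the image of the map A' → A'^⊕2, h ↦ (fh, gh). -/

import Mathlib

set_option synthInstance.maxHeartbeats 1000000
set_option maxHeartbeats 2000000
open MvPolynomial

namespace Stmt4Aux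

variable {R : Type*} [CommRing R]

abbrev SS (R : Type*) [CommRing R] := MvPolynomial (Fin 2) R

/-- Elements of `R[x²,y²]` have coefficients supported on even exponents. -/
lemma coeff_adjoin_eq_zero {h : (SS R)}
    (hh : h ∈ Algebra.adjoin R {(X 0 : (SS R)) ^ 2, (X 1) ^ 2}) :
    ∀ m : Fin 2 →₀ ℕ, (∃ i, Odd (m i)) → coeff m h = 0 := by
  refine Algebra.adjoin_induction (fun x hx => ?_) (fun r => ?_)
    (fun x y _ _ hx hy => ?_) (fun x y _ _ hx hy => ?_) hh
  · rintro m ⟨i, hi⟩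
    rcases hx with hx | hx <;> subst hx <;>
    · rw [coeff_X_pow]
      split
      · next heq =>
        exfalso
        rw [← heq] at hi
        rw [Finsupp.single_apply] at hi
        split at hi <;> simp [Nat.odd_iff] at hi
      · rfl
  · rintro m ⟨i, hi⟩
    rw [algebraMap_eq, coeff_C]
    split
    · next heq => exfalso; rw [← heq] at hi; simp [Nat.odd_iff] at hi
    · rfl
  · rintro m ⟨i, hi⟩
    rw [coeff_add, hx m ⟨i, hi⟩, hy m ⟨i, hi⟩, add_zero]
  · rintro m ⟨i, hi⟩
    rw [coeff_mul]
    refine Finset.sum_eq_zero fun p hp => ?_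
    rw [Finset.HasAntidiagonal.mem_antidiagonal] at hp
    have hsum : p.1 i + p.2 i = m i := by rw [← hp]; rfl
    rcases Nat.even_or_odd (p.1 i) with he | ho
    · have : Odd (p.2 i) := by
        rw [Nat.odd_iff] at hi ⊢; rw [Nat.even_iff] at he; omega
      rw [hy p.2 ⟨i, this⟩, mul_zero]
    · rw [hx p.1 ⟨i, ho⟩, zero_mul]

/-- In characteristic 2, partial derivatives vanish on `R[x²,y²]`. -/
lemma pderiv_adjoin_eq_zero (h2 : (2 : R) = 0) {h : (SS R)}
    (hh : h ∈ Algebra.adjoin R {(X 0 : (SS R)) ^ 2, (X 1) ^ 2}) (i : Fin 2) :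
    pderiv i h = 0 := by
  have h2' : (2 : (SS R)) = 0 := by
    rw [← map_ofNat (C : R →+* (SS R)) 2, h2, map_zero]
  refine Algebra.adjoin_induction (fun x hx => ?_) (fun r => ?_)
    (fun x y _ _ hx hy => ?_) (fun x y _ _ hx hy => ?_) hh
  · rcases hx with hx | hx <;> subst hx <;>
    · rw [sq, Derivation.leibniz, ← two_mul, h2', zero_mul]
  · rw [algebraMap_eq, pderiv_C]
  · rw [map_add, hx, hy, add_zero]
  · rw [Derivation.leibniz, hx, hy]; simp

section Tmap

variable (A' : Subalgebra R (SS R))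

lemma smul_def' (x : A') (p : (SS R)) : x • p = ↑x * p := rfl

/-- The map `(a,(b,c),d) ↦ a + b·x + c·y + d·xy`. -/
noncomputable def Tmap : (A' × (A' × A') × A') →ₗ[A'] (SS R) :=
  LinearMap.coprod (LinearMap.toSpanSingleton A' (SS R) 1)
    (LinearMap.coprod
      (LinearMap.coprod (LinearMap.toSpanSingleton A' (SS R) (X 0))
        (LinearMap.toSpanSingleton A' (SS R) (X 1)))
      (LinearMap.toSpanSingleton A' (SS R) (X 0 * X 1)))

lemma Tmap_apply (a b c d : A') :
    Tmap A' (a, (b, c), d)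
      = (a : SS R) + (b : SS R) * X 0 + (c : SS R) * X 1 + (d : SS R) * (X 0 * X 1) := by
  simp only [Tmap, LinearMap.coprod_apply, LinearMap.toSpanSingleton_apply, smul_def']
  ring

end Tmap

variable {A' : Subalgebra R (SS R)}

lemma Tmap_surjective (hA' : A' = Algebra.adjoin R {(X 0 : (SS R)) ^ 2, (X 1) ^ 2}) : Function.Surjective (Tmap A') := by
  have hx2 : (X 0 : (SS R)) ^ 2 ∈ A' := hA' ▸ Algebra.subset_adjoin (by simp)
  have hy2 : (X 1 : (SS R)) ^ 2 ∈ A' := hA' ▸ Algebra.subset_adjoin (by simp)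
  intro p
  induction p using MvPolynomial.induction_on with
  | C r =>
    have hm : (C r : SS R) ∈ A' := by
      rw [← MvPolynomial.algebraMap_eq]; exact A'.algebraMap_mem r
    refine ⟨(⟨C r, hm⟩, (0, 0), 0), ?_⟩
    rw [Tmap_apply]
    simp
  | add p q hp hq =>
    obtain ⟨u, hu⟩ := hp
    obtain ⟨v, hv⟩ := hq
    exact ⟨u + v, by rw [map_add, hu, hv]⟩
  | mul_X p i hp =>
    obtain ⟨⟨a, ⟨b, c⟩, d⟩, hu⟩ := hp
    fin_cases i
    · refine ⟨(b * ⟨_, hx2⟩, (a, d * ⟨_, hx2⟩), c), ?_⟩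
      rw [Tmap_apply, ← hu, Tmap_apply]
      push_cast
      ring
    · refine ⟨(c * ⟨_, hy2⟩, (d * ⟨_, hy2⟩, a), b), ?_⟩
      rw [Tmap_apply, ← hu, Tmap_apply]
      push_cast
      ring

lemma cz' {q : (SS R)} {i : Fin 2} {m : Fin 2 →₀ ℕ}
    (h : m i ≠ 0 → coeff (m - Finsupp.single i 1) q = 0) :
    coeff m (q * X i) = 0 := by
  rw [coeff_mul_X']
  split
  · next hs => exact h (Finsupp.mem_support_iff.mp hs)
  · rfl

lemma Tmap_injective (hA' : A' = Algebra.adjoin R {(X 0 : (SS R)) ^ 2, (X 1) ^ 2}) : Function.Injective (Tmap A') := by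
  have key : ∀ v : A' × (A' × A') × A', Tmap A' v = 0 → v = 0 := by
    rintro ⟨a, ⟨b, c⟩, d⟩ h0
    rw [Tmap_apply] at h0
    have pa := coeff_adjoin_eq_zero (show (a : SS R) ∈ Algebra.adjoin R {(X 0 : SS R) ^ 2, (X 1) ^ 2} by rw [← hA']; exact a.2)
    have pb := coeff_adjoin_eq_zero (show (b : SS R) ∈ Algebra.adjoin R {(X 0 : SS R) ^ 2, (X 1) ^ 2} by rw [← hA']; exact b.2)
    have pc := coeff_adjoin_eq_zero (show (c : SS R) ∈ Algebra.adjoin R {(X 0 : SS R) ^ 2, (X 1) ^ 2} by rw [← hA']; exact c.2)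
    have pd := coeff_adjoin_eq_zero (show (d : SS R) ∈ Algebra.adjoin R {(X 0 : SS R) ^ 2, (X 1) ^ 2} by rw [← hA']; exact d.2)
    -- b = 0
    have hb : (b : (SS R)) = 0 := by
      apply MvPolynomial.ext; intro m
      rcases Decidable.em (∃ i, Odd (m i)) with hodd | heven
      · simp [pb m hodd]
      push_neg at heven
      have hm0 : ¬ Odd (m 0) := heven 0
      have hm1 : ¬ Odd (m 1) := heven 1
      rw [Nat.not_odd_iff] at hm0 hm1
      have h1 := congrArg (coeff (m + Finsupp.single 0 1)) h0
      rw [coeff_add, coeff_add, coeff_add, coeff_zero] at h1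
      have e1 : coeff (m + Finsupp.single 0 1) (a : (SS R)) = 0 := by
        refine pa _ ⟨0, ?_⟩
        have : ((m + Finsupp.single (0 : Fin 2) 1 : Fin 2 →₀ ℕ)) 0 = m 0 + 1 := by
          simp [Finsupp.add_apply, Finsupp.single_apply]
        rw [this, Nat.odd_iff]; omega
      have e3 : coeff (m + Finsupp.single 0 1) ((c : (SS R)) * X 1) = 0 := by
        apply cz'; intro hne
        refine pc _ ⟨1, ?_⟩
        have hne' : m 1 ≠ 0 := by
          intro h
          exact hne (by simp [Finsupp.add_apply, Finsupp.single_apply, h])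
        have : ((m + Finsupp.single (0 : Fin 2) 1 - Finsupp.single 1 1 : Fin 2 →₀ ℕ)) 1 = m 1 - 1 := by
          simp [Finsupp.tsub_apply, Finsupp.add_apply, Finsupp.single_apply]
        rw [this, Nat.odd_iff]; omega
      have e4 : coeff (m + Finsupp.single 0 1) ((d : (SS R)) * (X 0 * X 1)) = 0 := by
        rw [← mul_assoc]
        apply cz'; intro hne
        apply cz'; intro hne0
        refine pd _ ⟨1, ?_⟩
        have hne' : m 1 ≠ 0 := by
          intro h
          exact hne (by simp [Finsupp.add_apply, Finsupp.single_apply, h])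
        have : ((m + Finsupp.single (0 : Fin 2) 1 - Finsupp.single 1 1
            - Finsupp.single 0 1 : Fin 2 →₀ ℕ)) 1 = m 1 - 1 := by
          simp [Finsupp.tsub_apply, Finsupp.add_apply, Finsupp.single_apply]
        rw [this, Nat.odd_iff]; omega
      rw [e1, e3, e4, coeff_mul_X m 0 (b : (SS R))] at h1
      rw [coeff_zero]
      simpa using h1
    -- c = 0
    have hc : (c : (SS R)) = 0 := by
      apply MvPolynomial.ext; intro m
      rcases Decidable.em (∃ i, Odd (m i)) with hodd | heven
      · simp [pc m hodd]
      push_neg at heven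
      have hm0 : ¬ Odd (m 0) := heven 0
      have hm1 : ¬ Odd (m 1) := heven 1
      rw [Nat.not_odd_iff] at hm0 hm1
      have h1 := congrArg (coeff (m + Finsupp.single 1 1)) h0
      rw [coeff_add, coeff_add, coeff_add, coeff_zero] at h1
      have e1 : coeff (m + Finsupp.single 1 1) (a : (SS R)) = 0 := by
        refine pa _ ⟨1, ?_⟩
        have : ((m + Finsupp.single (1 : Fin 2) 1 : Fin 2 →₀ ℕ)) 1 = m 1 + 1 := by
          simp [Finsupp.add_apply, Finsupp.single_apply]
        rw [this, Nat.odd_iff]; omega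
      have e2 : coeff (m + Finsupp.single 1 1) ((b : (SS R)) * X 0) = 0 := by
        apply cz'; intro hne
        refine pb _ ⟨0, ?_⟩
        have hne' : m 0 ≠ 0 := by
          intro h
          exact hne (by simp [Finsupp.add_apply, Finsupp.single_apply, h])
        have : ((m + Finsupp.single (1 : Fin 2) 1 - Finsupp.single 0 1 : Fin 2 →₀ ℕ)) 0 = m 0 - 1 := by
          simp [Finsupp.tsub_apply, Finsupp.add_apply, Finsupp.single_apply]
        rw [this, Nat.odd_iff]; omega
      have e4 : coeff (m + Finsupp.single 1 1) ((d : (SS R)) * (X 0 * X 1)) = 0 := by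
        rw [← mul_assoc]
        apply cz'; intro hne
        apply cz'; intro hne0
        refine pd _ ⟨0, ?_⟩
        have hne' : m 0 ≠ 0 := by
          intro h
          exact hne0 (by simp [Finsupp.tsub_apply, Finsupp.add_apply,
            Finsupp.single_apply, h])
        have : ((m + Finsupp.single (1 : Fin 2) 1 - Finsupp.single 1 1
            - Finsupp.single 0 1 : Fin 2 →₀ ℕ)) 0 = m 0 - 1 := by
          simp [Finsupp.tsub_apply, Finsupp.add_apply, Finsupp.single_apply]
        rw [this, Nat.odd_iff]; omega
      rw [e1, e2, e4, coeff_mul_X m 1 (c : (SS R))] at h1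
      rw [coeff_zero]
      simpa using h1
    -- d = 0
    have hd : (d : (SS R)) = 0 := by
      apply MvPolynomial.ext; intro m
      rcases Decidable.em (∃ i, Odd (m i)) with hodd | heven
      · simp [pd m hodd]
      push_neg at heven
      have hm0 : ¬ Odd (m 0) := heven 0
      have hm1 : ¬ Odd (m 1) := heven 1
      rw [Nat.not_odd_iff] at hm0 hm1
      have h1 := congrArg (coeff ((m + Finsupp.single 0 1) + Finsupp.single 1 1)) h0
      rw [coeff_add, coeff_add, coeff_add, coeff_zero] at h1
      have e1 : coeff ((m + Finsupp.single 0 1) + Finsupp.single 1 1) (a : (SS R)) = 0 := by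
        refine pa _ ⟨0, ?_⟩
        have : (((m + Finsupp.single 0 1) + Finsupp.single (1 : Fin 2) 1 : Fin 2 →₀ ℕ)) 0 = m 0 + 1 := by
          simp [Finsupp.add_apply, Finsupp.single_apply]
        rw [this, Nat.odd_iff]; omega
      have e2 : coeff ((m + Finsupp.single 0 1) + Finsupp.single 1 1) ((b : (SS R)) * X 0) = 0 := by
        apply cz'; intro hne
        refine pb _ ⟨1, ?_⟩
        have : (((m + Finsupp.single 0 1) + Finsupp.single (1 : Fin 2) 1
            - Finsupp.single 0 1 : Fin 2 →₀ ℕ)) 1 = m 1 + 1 := by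
          simp [Finsupp.tsub_apply, Finsupp.add_apply, Finsupp.single_apply]
        rw [this, Nat.odd_iff]; omega
      have e3 : coeff ((m + Finsupp.single 0 1) + Finsupp.single 1 1) ((c : (SS R)) * X 1) = 0 := by
        apply cz'; intro hne
        refine pc _ ⟨0, ?_⟩
        have : (((m + Finsupp.single 0 1) + Finsupp.single (1 : Fin 2) 1
            - Finsupp.single 1 1 : Fin 2 →₀ ℕ)) 0 = m 0 + 1 := by
          simp [Finsupp.tsub_apply, Finsupp.add_apply, Finsupp.single_apply]
        rw [this, Nat.odd_iff]; omega
      have e4 : coeff ((m + Finsupp.single 0 1) + Finsupp.single 1 1)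
          ((d : (SS R)) * (X 0 * X 1)) = coeff m (d : (SS R)) := by
        rw [← mul_assoc, coeff_mul_X _ 1 ((d : (SS R)) * X 0), coeff_mul_X m 0 (d : (SS R))]
      rw [e1, e2, e3, e4] at h1
      rw [coeff_zero]
      simpa using h1
    have ha : (a : (SS R)) = 0 := by
      rw [hb, hc, hd] at h0
      simpa using h0
    refine Prod.ext ?_ (Prod.ext (Prod.ext ?_ ?_) ?_) <;>
      simp [Subtype.ext_iff, ha, hb, hc, hd]
  intro u v huv
  have h2 : Tmap A' (u - v) = 0 := by rw [map_sub, huv, sub_self]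
  have h3 := key _ h2
  rwa [sub_eq_zero] at h3

/-- Quotient of a product by a product submodule. -/
noncomputable def quotProd {M N : Type*} [AddCommGroup M] [AddCommGroup N]
    {A : Type*} [Ring A] [Module A M] [Module A N]
    (p : Submodule A M) (q : Submodule A N) :
    ((M × N) ⧸ p.prod q) ≃ₗ[A] (M ⧸ p) × (N ⧸ q) :=
  (Submodule.quotEquivOfEq (p.prod q) (LinearMap.ker (p.mkQ.prodMap q.mkQ)) (by
    rw [LinearMap.ker_prodMap, Submodule.ker_mkQ, Submodule.ker_mkQ])).trans
    ((p.mkQ.prodMap q.mkQ).quotKerEquivOfSurjective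
      (fun ⟨x, y⟩ => by
        obtain ⟨x', hx'⟩ := p.mkQ_surjective x
        obtain ⟨y', hy'⟩ := q.mkQ_surjective y
        exact ⟨(x', y'), by simp [hx', hy']⟩))

/-- The matrix of `δ` in the basis `1, x, y, xy`, over an arbitrary commutative ring. -/
noncomputable def Dmap {A : Type*} [CommRing A] (F G : A) :
    (A × (A × A) × A) →ₗ[A] (A × (A × A) × A) where
  toFun v := (F * v.2.1.1 + G * v.2.1.2, (G * v.2.2, F * v.2.2), 0)
  map_add' u v := by
    refine Prod.ext ?_ (Prod.ext (Prod.ext ?_ ?_) ?_) <;> simp <;> ring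
  map_smul' r v := by
    refine Prod.ext ?_ (Prod.ext (Prod.ext ?_ ?_) ?_) <;> simp [smul_eq_mul] <;> ring

lemma Dmap_apply {A : Type*} [CommRing A] (F G a b c d : A) :
    Dmap F G (a, (b, c), d) = (F * b + G * c, (G * d, F * d), 0) := rfl

lemma range_Dmap {A : Type*} [CommRing A] (F G : A) :
    LinearMap.range (Dmap F G) = (Submodule.span A {F, G}).prod
      ((LinearMap.range (LinearMap.prod (G • (LinearMap.id : A →ₗ[A] A))
        (F • LinearMap.id))).prod (⊥ : Submodule A A)) := by
  ext x
  obtain ⟨u, ⟨v, w⟩, z⟩ := x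
  simp only [LinearMap.mem_range, Submodule.mem_prod, Submodule.mem_span_pair,
    Submodule.mem_bot, LinearMap.prod_apply, Function.prod, LinearMap.smul_apply,
    LinearMap.id_apply, smul_eq_mul]
  constructor
  · rintro ⟨⟨a, ⟨b, c⟩, d⟩, heq⟩
    rw [Dmap_apply] at heq
    simp only [Prod.mk.injEq] at heq
    obtain ⟨h1, ⟨h2a, h2b⟩, h4⟩ := heq
    refine ⟨⟨b, c, by rw [← h1]; ring⟩, ⟨d, ?_⟩, h4.symm⟩
    simp only [Prod.mk.injEq]
    exact ⟨h2a, h2b⟩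
  · rintro ⟨⟨b, c, h1⟩, ⟨d, h2'⟩, h4⟩
    refine ⟨(0, (b, c), d), ?_⟩
    rw [Dmap_apply]
    simp only [Prod.mk.injEq] at h2' ⊢
    obtain ⟨h2a, h2b⟩ := h2'
    exact ⟨by rw [← h1]; ring, ⟨h2a, h2b⟩, h4.symm⟩

lemma map_prodComm_range {A : Type*} [CommRing A] (F G : A) :
    Submodule.map (LinearEquiv.prodComm A A A : (A × A) →ₗ[A] (A × A))
      (LinearMap.range (LinearMap.prod (G • (LinearMap.id : A →ₗ[A] A)) (F • LinearMap.id)))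
    = LinearMap.range (LinearMap.prod (F • (LinearMap.id : A →ₗ[A] A)) (G • LinearMap.id)) := by
  ext x
  obtain ⟨u, v⟩ := x
  simp only [Submodule.mem_map, LinearMap.mem_range, LinearMap.prod_apply,
    Function.prod, LinearMap.smul_apply, LinearMap.id_apply, smul_eq_mul,
    LinearEquiv.coe_coe, LinearEquiv.prodComm_apply]
  constructor
  · rintro ⟨y, ⟨h, rfl⟩, hsw⟩
    refine ⟨h, ?_⟩
    simpa using hsw
  · rintro ⟨h, heq⟩
    exact ⟨(G * h, F * h), ⟨h, rfl⟩, by simpa using heq⟩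

lemma comap_prodComm_range {A : Type*} [CommRing A] (F G : A) :
    Submodule.comap (LinearEquiv.prodComm A A A : (A × A) →ₗ[A] (A × A))
      (LinearMap.range (LinearMap.prod (F • (LinearMap.id : A →ₗ[A] A)) (G • LinearMap.id)))
    = LinearMap.range (LinearMap.prod (G • (LinearMap.id : A →ₗ[A] A)) (F • LinearMap.id)) := by
  ext x
  obtain ⟨u, v⟩ := x
  simp only [Submodule.mem_comap, LinearMap.mem_range, LinearMap.prod_apply,
    Function.prod, LinearMap.smul_apply, LinearMap.id_apply, smul_eq_mul,
    LinearEquiv.coe_coe, LinearEquiv.prodComm_apply, Prod.swap_prod_mk, Prod.mk.injEq]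
  constructor
  · rintro ⟨h, h1, h2⟩
    exact ⟨h, h2, h1⟩
  · rintro ⟨h, h1, h2⟩
    exact ⟨h, h2, h1⟩

end Stmt4Aux


set_option synthInstance.maxHeartbeats 4000000
set_option maxHeartbeats 64000000

/-- Let `A = R[x,y]` in characteristic 2 and `A' = R[x²,y²]`, over which `A` is free with
basis `1, x, y, xy`.  For `f, g ∈ A'`, the `A'`-linear operator `δ = f·∂/∂x + g·∂/∂y`
on `A` has cokernel isomorphic, as an `A'`-module, to
`(A'/(f,g)) ⊕ (A'^⊕2/(f,g)A') ⊕ A'`, where `(f,g)A'` is the image of `h ↦ (fh, gh)`. -/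
theorem stmt4 (k : Type*) [Field k] [CharP k 2]
    (R : Type*) [CommRing R] [Algebra k R]
    (f g : MvPolynomial (Fin 2) R)
    (A' : Subalgebra R (MvPolynomial (Fin 2) R))
    (hA' : A' = Algebra.adjoin R {(X 0 : MvPolynomial (Fin 2) R) ^ 2, (X 1) ^ 2})
    (hf : f ∈ A') (hg : g ∈ A')
    (δ : MvPolynomial (Fin 2) R →ₗ[A'] MvPolynomial (Fin 2) R)
    (hδ : ∀ p : MvPolynomial (Fin 2) R,
      δ p = f * (pderiv 0) p + g * (pderiv 1) p) :
    Nonempty (((MvPolynomial (Fin 2) R) ⧸ LinearMap.range δ) ≃ₗ[A']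
      ((A' ⧸ Submodule.span A' ({⟨f, hf⟩, ⟨g, hg⟩} : Set A')) ×
       ((A' × A') ⧸ LinearMap.range
          (LinearMap.prod ((⟨f, hf⟩ : A') • (LinearMap.id : A' →ₗ[A'] A'))
            ((⟨g, hg⟩ : A') • (LinearMap.id : A' →ₗ[A'] A'))) ) ×
       A')) := by
  classical
  have h2 : (2 : R) = 0 := by
    have hk : (2 : k) = 0 := by
      have := CharP.cast_eq_zero k 2
      simpa using this
    rw [← map_ofNat (algebraMap k R) 2, show ((OfNat.ofNat 2 : k)) = 0 from hk, map_zero]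
  set F : A' := ⟨f, hf⟩ with hF
  set G : A' := ⟨g, hg⟩ with hG
  set T := Stmt4Aux.Tmap A' with hT
  have hbij : Function.Bijective T :=
    ⟨Stmt4Aux.Tmap_injective hA', Stmt4Aux.Tmap_surjective hA'⟩
  set Q : (A' × (A' × A') × A') ≃ₗ[A'] MvPolynomial (Fin 2) R :=
    LinearEquiv.ofBijective T hbij with hQ
  set D := Stmt4Aux.Dmap (F : A') G with hDdef
  have hpd : ∀ h : MvPolynomial (Fin 2) R, h ∈ A' → ∀ i, pderiv i h = 0 := by
    intro h hh i
    exact Stmt4Aux.pderiv_adjoin_eq_zero h2 (by rw [← hA']; exact hh) i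
  have hcomm : ∀ v, δ (T v) = T (D v) := by
    rintro ⟨a, ⟨b, c⟩, d⟩
    rw [hDdef, Stmt4Aux.Dmap_apply, hT, Stmt4Aux.Tmap_apply, Stmt4Aux.Tmap_apply, hδ]
    have da := hpd _ a.2
    have db := hpd _ b.2
    have dc := hpd _ c.2
    have dd := hpd _ d.2
    simp only [map_add, Derivation.leibniz, pderiv_X, da, db, dc, dd,
      smul_zero, zero_add, add_zero, smul_eq_mul, Pi.single_apply]
    push_cast
    ring
  have hcomp : δ ∘ₗ (Q : _ →ₗ[A'] _) = (Q : _ →ₗ[A'] _) ∘ₗ D := by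
    apply LinearMap.ext
    intro v
    exact hcomm v
  have hrange : Submodule.map (Q : _ →ₗ[A'] _) (LinearMap.range D) = LinearMap.range δ := by
    rw [← LinearMap.range_comp, ← hcomp,
      LinearMap.range_comp_of_range_eq_top δ (LinearMap.range_eq_top.mpr Q.surjective)]
  let E1 : ((MvPolynomial (Fin 2) R) ⧸ LinearMap.range δ) ≃ₗ[A']
      ((A' × (A' × A') × A') ⧸ LinearMap.range D) :=
    (Submodule.Quotient.equiv (LinearMap.range D) (LinearMap.range δ) Q hrange).symm
  set PGF := LinearMap.prod (G • (LinearMap.id : A' →ₗ[A'] A')) (F • LinearMap.id) with hPGF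
  set PFG := LinearMap.prod (F • (LinearMap.id : A' →ₗ[A'] A')) (G • LinearMap.id) with hPFG
  have hD : LinearMap.range D = (Submodule.span A' {F, G}).prod
      ((LinearMap.range PGF).prod (⊥ : Submodule A' A')) := by
    rw [hDdef, hPGF]
    exact Stmt4Aux.range_Dmap F G
  have hq2ker : LinearMap.ker ((LinearMap.range PFG).mkQ ∘ₗ
      (LinearEquiv.prodComm A' A' A' : (A' × A') →ₗ[A'] (A' × A'))) = LinearMap.range PGF := by
    rw [LinearMap.ker_comp, Submodule.ker_mkQ, hPGF, hPFG]
    exact Stmt4Aux.comap_prodComm_range F G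
  let Φ : (A' × (A' × A') × A') →ₗ[A']
      ((A' ⧸ Submodule.span A' {F, G}) × ((A' × A') ⧸ LinearMap.range PFG) × A') :=
    LinearMap.prodMap (Submodule.span A' {F, G}).mkQ
      (LinearMap.prodMap ((LinearMap.range PFG).mkQ ∘ₗ
        (LinearEquiv.prodComm A' A' A' : (A' × A') →ₗ[A'] (A' × A'))) LinearMap.id)
  have hker : LinearMap.ker Φ = (Submodule.span A' {F, G}).prod
      ((LinearMap.range PGF).prod (⊥ : Submodule A' A')) := by
    show LinearMap.ker (LinearMap.prodMap _ _) = _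
    rw [LinearMap.ker_prodMap, LinearMap.ker_prodMap, hq2ker, Submodule.ker_mkQ,
      LinearMap.ker_id]
  have hsurj : Function.Surjective Φ := by
    show Function.Surjective (LinearMap.prodMap _ _)
    rw [LinearMap.coe_prodMap]
    refine Function.Surjective.prodMap (Submodule.mkQ_surjective _) ?_
    rw [LinearMap.coe_prodMap]
    refine Function.Surjective.prodMap ?_ Function.surjective_id
    rw [LinearMap.coe_comp]
    exact (Submodule.mkQ_surjective _).comp (LinearEquiv.surjective _)
  exact ⟨E1.trans ((Submodule.quotEquivOfEq _ _ (hD.trans hker.symm)).trans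
    (Φ.quotKerEquivOfSurjective hsurj))⟩
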